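/- Let M be a good deterministic finite automaton over {0,1} with start state q_s. Then the linguage 𝐋(M) is non-scattered if and only if q_s is an η̄-state. -/

import Mathlib

/-- A deterministic finite automaton with a partial transition function. -/
structure PDFA (σ : Type) where
  /-- the (finite) set of states -/
  State : Type
  finState : Finite State
  /-- the start state -/
  start : State
  /-- the set of accept states -/
  accept : Set State
  /-- the partial transition function -/
  step : State → σ → Option State

namespace PDFA

variable {σ : Type} (M : PDFA σ)

/-- The extended (partial) transition function `δ̂`, reading the word left to right. -/
def run (q : M.State) (w : List σ) : Option M.State :=
  w.foldlM (fun q a => M.step q a) q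

/-- The language accepted by the automaton. -/
def lang : Set (List σ) := {w | ∃ q ∈ M.accept, M.run M.start w = some q}

end PDFA

/-- The inorder relation `<₂` on finite binary words: `x <₂ y` iff, writing
`x = w·x'`, `y = w·y'` with `w` the longest common prefix, either `x'` begins
with `0`(=`false`) or `y'` begins with `1`(=`true`). -/
def inlt : List Bool → List Bool → Prop
  | [], [] => False
  | [], b :: _ => b = true
  | a :: _, [] => a = false
  | a :: x, b :: y => (a = false ∧ b = true) ∨ (a = b ∧ inlt x y)

/-- A DFA is good if every state is reachable from the start state and some accept
state is reachable from it. -/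
def PDFA.Good {σ : Type} (M : PDFA σ) : Prop :=
  ∀ q : M.State, (∃ x, M.run M.start x = some q) ∧ (∃ y, ∃ f ∈ M.accept, M.run q y = some f)

/-- `p` is an η-state: there are words `x₀, x₁` with `δ̂(p, 0x₀) = p = δ̂(p, 1x₁)`. -/
def PDFA.EtaState (M : PDFA Bool) (p : M.State) : Prop :=
  (∃ x₀, M.run p (false :: x₀) = some p) ∧ (∃ x₁, M.run p (true :: x₁) = some p)

/-- `p` is an η̄-state: some state reachable from `p` is an η-state. -/
def PDFA.EtaBarState (M : PDFA Bool) (p : M.State) : Prop :=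
  ∃ x q, M.run p x = some q ∧ M.EtaState q

/-- `(L, r)` is scattered: no subset of it is order-isomorphic to `ℚ`. -/
def Scattered (L : Type) (r : L → L → Prop) : Prop :=
  ¬ ∃ f : ℚ → L, ∀ a b : ℚ, a < b ↔ r (f a) (f b)

lemma inlt_cancel (p s t : List Bool) : inlt (p ++ s) (p ++ t) ↔ inlt s t := by
  induction p with
  | nil => rfl
  | cons a p ih => simp [inlt, ih]

lemma inlt_irrefl (x : List Bool) : ¬ inlt x x := by
  induction x with
  | nil => simp [inlt]
  | cons a x ih => simp [inlt, ih]

lemma inlt_asymm {x y : List Bool} : inlt x y → inlt y x → False := by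
  induction x generalizing y with
  | nil =>
    cases y with
    | nil => simp [inlt]
    | cons b y => simp [inlt]
  | cons a x ih =>
    cases y with
    | nil => simp [inlt]
    | cons b y =>
      simp only [inlt]
      rintro (⟨rfl, rfl⟩ | ⟨rfl, h1⟩) (⟨ha, hb⟩ | ⟨heq, h2⟩)
      · simp at ha
      · simp at heq
      · simp_all
      · exact ih h1 h2

lemma inlt_trans {x y z : List Bool} : inlt x y → inlt y z → inlt x z := by
  induction x generalizing y z with
  | nil =>
    cases y with
    | nil => simp [inlt]
    | cons b y =>
      cases z with
      | nil => simp [inlt]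
      | cons c z =>
        simp only [inlt]
        rintro rfl h
        rcases h with ⟨h, -⟩ | ⟨h, -⟩
        · exact absurd h (by simp)
        · exact h.symm
  | cons a x ih =>
    cases y with
    | nil =>
      cases z with
      | nil => simp [inlt]
      | cons c z => simp only [inlt]; rintro rfl h; rw [h]; left; exact ⟨rfl, rfl⟩
    | cons b y =>
      cases z with
      | nil =>
        simp only [inlt]
        rintro (⟨rfl, rfl⟩ | ⟨rfl, -⟩) h <;> simp_all
      | cons c z =>
        simp only [inlt]
        rintro (⟨rfl, rfl⟩ | ⟨rfl, h1⟩) (⟨h2, rfl⟩ | ⟨rfl, h2⟩) <;> simp_all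
        exact ih h1 h2

lemma inlt_total (x y : List Bool) : x = y ∨ inlt x y ∨ inlt y x := by
  induction x generalizing y with
  | nil =>
    cases y with
    | nil => left; rfl
    | cons b y => cases b <;> simp [inlt]
  | cons a x ih =>
    cases y with
    | nil => cases a <;> simp [inlt]
    | cons b y =>
      rcases ih y with rfl | h | h
      · cases a <;> cases b <;> simp [inlt]
      · cases a <;> cases b <;> simp [inlt, h]
      · cases a <;> cases b <;> simp [inlt, h]

/-- anything strictly between two words sharing a prefix `p` also has prefix `p`. -/
lemma between_prefix {p x y z : List Bool} (hxy : inlt x y) (hyz : inlt y z)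
    (hx : p <+: x) (hz : p <+: z) : p <+: y := by
  induction p generalizing x y z with
  | nil => exact List.nil_prefix
  | cons c p ih =>
    obtain ⟨x', rfl⟩ := hx
    obtain ⟨z', rfl⟩ := hz
    cases y with
    | nil =>
      exfalso
      simp only [List.cons_append, inlt] at hxy hyz
      simp_all
    | cons d y' =>
      simp only [List.cons_append, inlt] at hxy hyz
      rcases hxy with ⟨rfl, rfl⟩ | ⟨rfl, hxy⟩
      · rcases hyz with ⟨h, -⟩ | ⟨h, -⟩ <;> exact absurd h (by simp)
      · rcases hyz with ⟨h1, h2⟩ | ⟨-, hyz⟩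
        · simp_all
        · exact (List.cons_prefix_cons).2 ⟨rfl, ih hxy hyz ⟨x', rfl⟩ ⟨z', rfl⟩⟩

/-- shape of the inorder relation -/
lemma inlt_shape {x y : List Bool} (h : inlt x y) :
    (∃ v, y = x ++ true :: v) ∨ (∃ v, x = y ++ false :: v) ∨
      (∃ w u v, x = w ++ false :: u ∧ y = w ++ true :: v) := by
  induction x generalizing y with
  | nil =>
    cases y with
    | nil => exact absurd h (by simp [inlt])
    | cons b y => simp only [inlt] at h; subst h; exact Or.inl ⟨y, rfl⟩
  | cons a x ih =>
    cases y with
    | nil => simp only [inlt] at h; subst h; exact Or.inr (Or.inl ⟨x, rfl⟩)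
    | cons b y =>
      simp only [inlt] at h
      rcases h with ⟨rfl, rfl⟩ | ⟨rfl, h⟩
      · exact Or.inr (Or.inr ⟨[], x, y, rfl, rfl⟩)
      · rcases ih h with ⟨v, rfl⟩ | ⟨v, rfl⟩ | ⟨w, u, v, rfl, rfl⟩
        · exact Or.inl ⟨v, rfl⟩
        · exact Or.inr (Or.inl ⟨v, rfl⟩)
        · exact Or.inr (Or.inr ⟨a :: w, u, v, rfl, rfl⟩)

namespace PDFA
variable {σ : Type} (M : PDFA σ)

lemma run_append (q : M.State) (x y : List σ) :
    M.run q (x ++ y) = M.run q x >>= fun q' => M.run q' y :=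
  List.foldlM_append

lemma run_append_some {q p : M.State} {x : List σ} (h : M.run q x = some p) (y : List σ) :
    M.run q (x ++ y) = M.run p y := by
  rw [run_append, h]; rfl

lemma run_some_of_prefix {q f : M.State} {y v : List σ} (h : M.run q y = some f)
    (hv : v <+: y) : ∃ p, M.run q v = some p := by
  obtain ⟨r, rfl⟩ := hv
  rw [run_append] at h
  cases hrv : M.run q v with
  | none => rw [hrv] at h; exact absurd h (by simp)
  | some p => exact ⟨p, rfl⟩

end PDFA

def WOrd := List Bool

lemma inlt_nil_cons (l : List Bool) : inlt [] (true :: l) := by simp [inlt]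
lemma inlt_cons_nil (l : List Bool) : inlt (false :: l) [] := by simp [inlt]
lemma inlt_ft {x y : List Bool} (l l' : List Bool) :
    inlt ((false :: x) ++ l) ((true :: y) ++ l') := by simp [inlt]

noncomputable instance : LinearOrder WOrd where
  lt := inlt
  le x y := inlt x y ∨ x = y
  le_refl x := Or.inr rfl
  le_trans x y z h1 h2 := by
    rcases h1 with h1 | rfl
    · rcases h2 with h2 | rfl
      · exact Or.inl (inlt_trans h1 h2)
      · exact Or.inl h1
    · exact h2
  le_antisymm x y h1 h2 := by
    rcases h1 with h1 | rfl
    · rcases h2 with h2 | rfl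
      · exact absurd (inlt_asymm h1 h2) id
      · rfl
    · rfl
  le_total x y := by
    rcases inlt_total x y with rfl | h | h
    · exact Or.inl (Or.inr rfl)
    · exact Or.inl (Or.inl h)
    · exact Or.inr (Or.inl h)
  lt_iff_le_not_ge x y := by
    constructor
    · intro h
      refine ⟨Or.inl h, ?_⟩
      rintro (h' | rfl)
      · exact inlt_asymm h h'
      · exact inlt_irrefl _ h
    · rintro ⟨h1 | rfl, h2⟩
      · exact h1
      · exact absurd (Or.inr rfl) h2
  toDecidableLE := fun _ _ => Classical.dec _

lemma WOrd.lt_iff {x y : WOrd} : x < y ↔ inlt x y := Iff.rfl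

instance : Countable WOrd := inferInstanceAs (Countable (List Bool))
instance : Nonempty WOrd := ⟨([] : List Bool)⟩

instance : DenselyOrdered WOrd := by
  constructor
  intro (a : List Bool) (b : List Bool) h
  rcases inlt_shape (WOrd.lt_iff.1 h) with ⟨v, rfl⟩ | ⟨v, rfl⟩ | ⟨w, u0, v0, rfl, rfl⟩
  · refine ⟨(a ++ true :: v) ++ [false], WOrd.lt_iff.2 ?_, WOrd.lt_iff.2 ?_⟩
    · simpa [List.append_assoc] using (inlt_cancel a [] (true :: (v ++ [false]))).2
        (inlt_nil_cons _)
    · simpa using (inlt_cancel (a ++ true :: v) [false] []).2 (inlt_cons_nil _)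
  · refine ⟨(b ++ false :: v) ++ [true], WOrd.lt_iff.2 ?_, WOrd.lt_iff.2 ?_⟩
    · simpa using (inlt_cancel (b ++ false :: v) [] [true]).2 (inlt_nil_cons _)
    · simpa [List.append_assoc] using (inlt_cancel b (false :: (v ++ [true])) []).2
        (inlt_cons_nil _)
  · refine ⟨(w ++ false :: u0) ++ [true], WOrd.lt_iff.2 ?_, WOrd.lt_iff.2 ?_⟩
    · simpa using (inlt_cancel (w ++ false :: u0) [] [true]).2 (inlt_nil_cons _)
    · simpa [List.append_assoc] using (inlt_cancel w (false :: (u0 ++ [true]))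
        (true :: v0)).2 (by simp [inlt])

instance : NoMinOrder WOrd :=
  ⟨fun (a : List Bool) => ⟨a ++ [false], WOrd.lt_iff.2 (by
    simpa using (inlt_cancel a [false] []).2 (inlt_cons_nil _))⟩⟩

instance : NoMaxOrder WOrd :=
  ⟨fun (a : List Bool) => ⟨a ++ [true], WOrd.lt_iff.2 (by
    simpa using (inlt_cancel a [] [true]).2 (inlt_nil_cons _))⟩⟩

lemma inlt_iff_of_mono {F : List Bool → List Bool}
    (hF : ∀ {s t : List Bool}, inlt s t → inlt (F s) (F t)) {s t : List Bool} :
    inlt s t ↔ inlt (F s) (F t) := by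
  refine ⟨hF, fun h => ?_⟩
  rcases inlt_total s t with rfl | h' | h'
  · exact absurd h (inlt_irrefl _)
  · exact h'
  · exact absurd (hF h') (fun c => inlt_asymm h c)

theorem backward (M : PDFA Bool) (hM : M.Good) (h : M.EtaBarState M.start) :
    ∃ f : ℚ → {w : List Bool // w ∈ M.lang}, ∀ a b : ℚ, a < b ↔ inlt (f a).1 (f b).1 := by
  obtain ⟨u, q, hu, ⟨x₀, h0⟩, ⟨x₁, h1⟩⟩ := h
  obtain ⟨z, fs, hfs, hz⟩ := (hM q).2
  set A : List Bool := false :: x₀ with hA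
  set B : List Bool := true :: x₁ with hB
  set blk : Bool → List Bool := fun c => if c then B else A with hblk
  set C : List Bool → List Bool := fun s => s.flatMap (fun c => blk c ++ blk c) with hC
  have runblk : ∀ c, M.run q (blk c) = some q := by
    intro c; cases c <;> simp [hblk, h0, h1]
  have runC : ∀ s, M.run q (C s) = some q := by
    intro s
    induction s with
    | nil => simp [hC, PDFA.run, List.foldlM]
    | cons c s ih =>
      have : C (c :: s) = blk c ++ (blk c ++ C s) := by simp [hC]
      rw [this, M.run_append_some (runblk c), M.run_append_some (runblk c), ih]
  set F : List Bool → List Bool := fun s => u ++ (C s ++ (A ++ (B ++ z))) with hF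
  have memF : ∀ s, F s ∈ M.lang := by
    intro s
    refine ⟨fs, hfs, ?_⟩
    rw [hF]
    rw [M.run_append_some hu, M.run_append_some (runC s), M.run_append_some h0,
      M.run_append_some h1]
    exact hz
  have Cap : ∀ s t, C (s ++ t) = C s ++ C t := by intro s t; simp [hC]
  have Ccons : ∀ c s, C (c :: s) = blk c ++ (blk c ++ C s) := by intro c s; simp [hC]
  have Fmono : ∀ {s t : List Bool}, inlt s t → inlt (F s) (F t) := by
    intro s t hst
    rcases inlt_shape hst with ⟨v, rfl⟩ | ⟨v, rfl⟩ | ⟨w, u0, v0, rfl, rfl⟩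
    · have : inlt ((u ++ C s) ++ (A ++ (B ++ z)))
          ((u ++ C s) ++ (B ++ (B ++ (C v ++ (A ++ (B ++ z)))))) :=
        (inlt_cancel _ _ _).2 (by rw [hA, hB]; exact inlt_ft _ _)
      simpa [hF, Cap, Ccons, List.append_assoc, hblk] using this
    · have : inlt ((u ++ (C t ++ A)) ++ (A ++ (C v ++ (A ++ (B ++ z)))))
          ((u ++ (C t ++ A)) ++ (B ++ z)) :=
        (inlt_cancel _ _ _).2 (by rw [hA, hB]; exact inlt_ft _ _)
      simpa [hF, Cap, Ccons, List.append_assoc, hblk] using this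
    · have : inlt ((u ++ C w) ++ (A ++ (A ++ (C u0 ++ (A ++ (B ++ z))))))
          ((u ++ C w) ++ (B ++ (B ++ (C v0 ++ (A ++ (B ++ z)))))) :=
        (inlt_cancel _ _ _).2 (by rw [hA, hB]; exact inlt_ft _ _)
      simpa [hF, Cap, Ccons, List.append_assoc, hblk] using this
  obtain ⟨e⟩ := Order.iso_of_countable_dense ℚ WOrd
  refine ⟨fun r => ⟨F (e r), memF _⟩, fun a b => ?_⟩
  rw [← e.lt_iff_lt]
  exact (WOrd.lt_iff).trans (inlt_iff_of_mono Fmono)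

/-- A set of binary words which is densely ordered by `inlt` with no greatest
or least element. -/
def DenseS (D : Set (List Bool)) : Prop :=
  D.Nonempty ∧ (∀ x ∈ D, ∃ y ∈ D, inlt y x) ∧ (∀ x ∈ D, ∃ y ∈ D, inlt x y) ∧
    (∀ x ∈ D, ∀ z ∈ D, inlt x z → ∃ y ∈ D, inlt x y ∧ inlt y z)

lemma split_lemma {D : Set (List Bool)} {p : List Bool} (hD : DenseS D)
    (hp : ∀ y ∈ D, p <+: y) :
    ∃ w D₀ D₁, p <+: w ∧ DenseS D₀ ∧ DenseS D₁ ∧ D₀ ⊆ D ∧ D₁ ⊆ D ∧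
      (∀ y ∈ D₀, w ++ [false] <+: y) ∧ (∀ y ∈ D₁, w ++ [true] <+: y) := by
  classical
  obtain ⟨⟨x₀, hx₀⟩, hmin, hmax, hdense⟩ := hD
  set P : ℕ → Prop := fun n => ∃ v : List Bool, v.length = n ∧ v <+: x₀ ∧ ∀ y ∈ D, v <+: y
    with hP
  have hPp : P p.length := ⟨p, rfl, hp x₀ hx₀, hp⟩
  have hPb : p.length ≤ x₀.length := (hp x₀ hx₀).length_le
  obtain ⟨w, hwlen, hwx₀, hw⟩ := Nat.findGreatest_spec (P := P) hPb hPp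
  have hmaxlen : ∀ v : List Bool, v <+: x₀ → (∀ y ∈ D, v <+: y) →
      v.length ≤ w.length := by
    intro v hv hvall
    rw [hwlen]
    exact Nat.le_findGreatest hv.length_le ⟨v, rfl, hv, hvall⟩
  have hpw : p <+: w := by
    rcases List.prefix_or_prefix_of_prefix (hp x₀ hx₀) hwx₀ with h | h
    · exact h
    · rw [List.IsPrefix.eq_of_length h
        (le_antisymm h.length_le (hmaxlen p (hp x₀ hx₀) hp))]
  -- classification of elements of D
  have cls : ∀ y ∈ D, y = w ∨ (w ++ [false] <+: y) ∨ (w ++ [true] <+: y) := by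
    intro y hy
    obtain ⟨t, rfl⟩ := hw y hy
    cases t with
    | nil => exact Or.inl (by simp)
    | cons c t =>
      cases c
      · exact Or.inr (Or.inl ⟨t, by simp⟩)
      · exact Or.inr (Or.inr ⟨t, by simp⟩)
  have fact0 : ∀ y, w ++ [false] <+: y → inlt y w := by
    rintro y ⟨t, rfl⟩
    have : inlt (w ++ (false :: t)) (w ++ []) := (inlt_cancel _ _ _).2 (inlt_cons_nil _)
    simpa using this
  have fact1 : ∀ y, w ++ [true] <+: y → inlt w y := by
    rintro y ⟨t, rfl⟩
    have : inlt (w ++ []) (w ++ (true :: t)) := (inlt_cancel _ _ _).2 (inlt_nil_cons _)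
    simpa using this
  have fact01 : ∀ y y', w ++ [false] <+: y → w ++ [true] <+: y' → inlt y y' := by
    rintro y y' ⟨t, rfl⟩ ⟨t', rfl⟩
    have : inlt (w ++ (false :: t)) (w ++ (true :: t')) :=
      (inlt_cancel _ _ _).2 (by simp [inlt])
    simpa using this
  -- both sides are inhabited
  have hD0ne : ∃ y ∈ D, w ++ [false] <+: y := by
    by_contra h0
    push_neg at h0
    by_cases hwD : w ∈ D
    · obtain ⟨y', hy', hlt⟩ := hmin w hwD
      rcases cls y' hy' with rfl | hc | hc
      · exact inlt_irrefl _ hlt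
      · exact h0 y' hy' hc
      · exact inlt_asymm hlt (fact1 y' hc)
    · have hall : ∀ y ∈ D, w ++ [true] <+: y := by
        intro y hy
        rcases cls y hy with rfl | hc | hc
        · exact absurd hy hwD
        · exact absurd hc (h0 y hy)
        · exact hc
      have := hmaxlen (w ++ [true]) (hall x₀ hx₀) hall
      simp at this
  have hD1ne : ∃ y ∈ D, w ++ [true] <+: y := by
    by_contra h0
    push_neg at h0
    by_cases hwD : w ∈ D
    · obtain ⟨y', hy', hlt⟩ := hmax w hwD
      rcases cls y' hy' with rfl | hc | hc
      · exact inlt_irrefl _ hlt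
      · exact inlt_asymm hlt (fact0 y' hc)
      · exact h0 y' hy' hc
    · have hall : ∀ y ∈ D, w ++ [false] <+: y := by
        intro y hy
        rcases cls y hy with rfl | hc | hc
        · exact absurd hy hwD
        · exact hc
        · exact absurd hc (h0 y hy)
      have := hmaxlen (w ++ [false]) (hall x₀ hx₀) hall
      simp at this
  obtain ⟨x', hx'D, hx'p⟩ := hD0ne
  obtain ⟨z', hz'D, hz'p⟩ := hD1ne
  -- a second point on each side
  obtain ⟨x'', hx''D, hx''lt⟩ := hmin x' hx'D
  have hx''p : w ++ [false] <+: x'' := by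
    rcases cls x'' hx''D with rfl | hc | hc
    · exact absurd hx''lt (fun h => inlt_asymm h (fact0 x' hx'p))
    · exact hc
    · exact absurd hx''lt (fun h => inlt_asymm h (fact01 x' x'' hx'p hc))
  obtain ⟨z'', hz''D, hz''lt⟩ := hmax z' hz'D
  have hz''p : w ++ [true] <+: z'' := by
    rcases cls z'' hz''D with rfl | hc | hc
    · exact absurd hz''lt (fun h => inlt_asymm h (fact1 z' hz'p))
    · exact absurd hz''lt (fun h => inlt_asymm h (fact01 z'' z' hc hz'p))
    · exact hc
  refine ⟨w, {y ∈ D | inlt x'' y ∧ inlt y x'}, {y ∈ D | inlt z' y ∧ inlt y z''},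
    hpw, ?_, ?_, fun y hy => hy.1, fun y hy => hy.1, ?_, ?_⟩
  · refine ⟨?_, ?_, ?_, ?_⟩
    · obtain ⟨y, hy, h1, h2⟩ := hdense x'' hx''D x' hx'D hx''lt
      exact ⟨y, hy, h1, h2⟩
    · rintro x ⟨hxD, h1, h2⟩
      obtain ⟨y, hy, hy1, hy2⟩ := hdense x'' hx''D x hxD h1
      exact ⟨y, ⟨hy, hy1, inlt_trans hy2 h2⟩, hy2⟩
    · rintro x ⟨hxD, h1, h2⟩
      obtain ⟨y, hy, hy1, hy2⟩ := hdense x hxD x' hx'D h2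
      exact ⟨y, ⟨hy, inlt_trans h1 hy1, hy2⟩, hy1⟩
    · rintro x ⟨hxD, hx1, hx2⟩ z ⟨hzD, hz1, hz2⟩ hxz
      obtain ⟨y, hy, hy1, hy2⟩ := hdense x hxD z hzD hxz
      exact ⟨y, ⟨hy, inlt_trans hx1 hy1, inlt_trans hy2 hz2⟩, hy1, hy2⟩
  · refine ⟨?_, ?_, ?_, ?_⟩
    · obtain ⟨y, hy, h1, h2⟩ := hdense z' hz'D z'' hz''D hz''lt
      exact ⟨y, hy, h1, h2⟩
    · rintro x ⟨hxD, h1, h2⟩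
      obtain ⟨y, hy, hy1, hy2⟩ := hdense z' hz'D x hxD h1
      exact ⟨y, ⟨hy, hy1, inlt_trans hy2 h2⟩, hy2⟩
    · rintro x ⟨hxD, h1, h2⟩
      obtain ⟨y, hy, hy1, hy2⟩ := hdense x hxD z'' hz''D h2
      exact ⟨y, ⟨hy, inlt_trans h1 hy1, hy2⟩, hy1⟩
    · rintro x ⟨hxD, hx1, hx2⟩ z ⟨hzD, hz1, hz2⟩ hxz
      obtain ⟨y, hy, hy1, hy2⟩ := hdense x hxD z hzD hxz
      exact ⟨y, ⟨hy, inlt_trans hx1 hy1, inlt_trans hy2 hz2⟩, hy1, hy2⟩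
  · rintro y ⟨hyD, h1, h2⟩
    exact between_prefix h1 h2 hx''p hx'p
  · rintro y ⟨hyD, h1, h2⟩
    exact between_prefix h1 h2 hz'p hz''p

def GoodPair (M : PDFA Bool) (c : Set (List Bool) × List Bool) : Prop :=
  DenseS c.1 ∧ c.1 ⊆ M.lang ∧ ∀ y ∈ c.1, c.2 <+: y

lemma step_lemma (M : PDFA Bool) (c : Set (List Bool) × List Bool) (h : GoodPair M c) :
    ∃ w c₀ c₁, c.2 <+: w ∧ GoodPair M c₀ ∧ GoodPair M c₁ ∧
      c₀.2 = w ++ [false] ∧ c₁.2 = w ++ [true] := by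
  obtain ⟨hD, hsub, hp⟩ := h
  obtain ⟨w, D₀, D₁, hpw, h₀, h₁, hs₀, hs₁, hw₀, hw₁⟩ := split_lemma hD hp
  exact ⟨w, (D₀, w ++ [false]), (D₁, w ++ [true]), hpw,
    ⟨h₀, hs₀.trans hsub, hw₀⟩, ⟨h₁, hs₁.trans hsub, hw₁⟩, rfl, rfl⟩

theorem forward (M : PDFA Bool)
    (hns : ∃ f : ℚ → {w : List Bool // w ∈ M.lang}, ∀ a b : ℚ, a < b ↔ inlt (f a).1 (f b).1) :
    M.EtaBarState M.start := by
  classical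
  obtain ⟨f, hf⟩ := hns
  set D : Set (List Bool) := Set.range (fun r => (f r).1) with hD
  have hfmono : ∀ {r₁ r₂ : ℚ}, inlt (f r₁).1 (f r₂).1 → r₁ < r₂ := by
    intro r₁ r₂ h
    rcases lt_trichotomy r₁ r₂ with h' | rfl | h'
    · exact h'
    · exact absurd h (inlt_irrefl _)
    · exact absurd ((hf _ _).1 h') (fun c => inlt_asymm h c)
  have hroot : GoodPair M (D, []) := by
    refine ⟨⟨⟨(f 0).1, ⟨0, rfl⟩⟩, ?_, ?_, ?_⟩, ?_, fun y _ => List.nil_prefix⟩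
    · rintro x ⟨r, rfl⟩
      exact ⟨(f (r - 1)).1, ⟨r - 1, rfl⟩, (hf _ _).1 (by linarith)⟩
    · rintro x ⟨r, rfl⟩
      exact ⟨(f (r + 1)).1, ⟨r + 1, rfl⟩, (hf _ _).1 (by linarith)⟩
    · rintro x ⟨r₁, rfl⟩ z ⟨r₂, rfl⟩ hxz
      have hr : r₁ < r₂ := hfmono hxz
      refine ⟨(f ((r₁ + r₂) / 2)).1, ⟨_, rfl⟩, ?_, ?_⟩
      · exact (hf _ _).1 (by linarith)
      · exact (hf _ _).1 (by linarith)
    · rintro x ⟨r, rfl⟩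
      exact (f r).2
  have step : ∀ c : {c // GoodPair M c}, ∃ (w : List Bool) (c₀ c₁ : {c // GoodPair M c}),
      c.1.2 <+: w ∧ c₀.1.2 = w ++ [false] ∧ c₁.1.2 = w ++ [true] := by
    intro c
    obtain ⟨w, c₀, c₁, hpw, h₀, h₁, e₀, e₁⟩ := step_lemma M c.1 c.2
    exact ⟨w, ⟨c₀, h₀⟩, ⟨c₁, h₁⟩, hpw, e₀, e₁⟩
  choose wfn ch0 ch1 hwpre hch0 hch1 using step
  set node : List Bool → {c // GoodPair M c} :=
    fun s => s.foldr (fun i c => bif i then ch1 c else ch0 c) ⟨(D, []), hroot⟩ with hnode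
  set V : List Bool → List Bool := fun s => wfn (node s) with hV
  have node_cons : ∀ i s, node (i :: s) = bif i then ch1 (node s) else ch0 (node s) := by
    intro i s; rfl
  have hnodeV : ∀ s, (node s).1.2 <+: V s := fun s => hwpre _
  have hVext : ∀ i s, V s ++ [i] <+: V (i :: s) := by
    intro i s
    have h := hnodeV (i :: s)
    rw [node_cons] at h
    cases i
    · rw [show (bif false then ch1 (node s) else ch0 (node s)) = ch0 (node s) from rfl,
        hch0] at h
      exact h
    · rw [show (bif true then ch1 (node s) else ch0 (node s)) = ch1 (node s) from rfl,
        hch1] at h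
      exact h
  have hVmono : ∀ u s, V s <+: V (u ++ s) := by
    intro u s
    induction u with
    | nil => exact List.prefix_refl _
    | cons i u ih =>
      refine ih.trans ?_
      exact ((List.prefix_append _ [i]).trans (hVext i (u ++ s)))
  have hVext2 : ∀ u i s, V s ++ [i] <+: V (u ++ i :: s) :=
    fun u i s => (hVext i s).trans (hVmono u (i :: s))
  -- every V s has a defined run
  have runV : ∀ s, ∃ qq, M.run M.start (V s) = some qq := by
    intro s
    obtain ⟨y, hy⟩ := (ch0 (node s)).2.1.1
    have hylang : y ∈ M.lang := (ch0 (node s)).2.2.1 hy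
    have hypre : V s <+: y := by
      have := (ch0 (node s)).2.2.2 y hy
      rw [hch0] at this
      exact (List.prefix_append _ _).trans this
    obtain ⟨qf, _, hrun⟩ := hylang
    exact M.run_some_of_prefix hrun hypre
  choose σfn hσ using runV
  letI : Finite M.State := M.finState
  set LS : List Bool → Set M.State := fun s => Set.range (fun u => σfn (u ++ s)) with hLS
  set n : List Bool → ℕ := fun s => (LS s).toFinite.toFinset.card with hn
  obtain ⟨s₀, hs₀⟩ : ∃ s₀, ∀ s, n s₀ ≤ n s := by
    obtain ⟨s₀, hs₀⟩ := Nat.sInf_mem (Set.range_nonempty n)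
    exact ⟨s₀, fun s => hs₀ ▸ Nat.sInf_le ⟨s, rfl⟩⟩
  have hsub : ∀ i, LS (i :: s₀) ⊆ LS s₀ := by
    rintro i x ⟨u, rfl⟩
    exact ⟨u ++ [i], by simp⟩
  have heq : ∀ i, LS (i :: s₀) = LS s₀ := by
    intro i
    have h1 : (LS (i :: s₀)).toFinite.toFinset ⊆ (LS s₀).toFinite.toFinset := by
      simp only [Set.Finite.toFinset_subset, Set.Finite.coe_toFinset]
      exact hsub i
    have h2 := Finset.eq_of_subset_of_card_le h1 (hs₀ (i :: s₀))
    have := congrArg (fun t : Finset M.State => (t : Set M.State)) h2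
    simpa [Set.Finite.coe_toFinset] using this
  have hmem : ∀ i, ∃ u, σfn (u ++ i :: s₀) = σfn s₀ := by
    intro i
    have : σfn s₀ ∈ LS s₀ := ⟨[], rfl⟩
    rw [← heq i] at this
    exact this
  obtain ⟨u₀, hu₀⟩ := hmem false
  obtain ⟨u₁, hu₁⟩ := hmem true
  set p := σfn s₀ with hp
  have hrunp : M.run M.start (V s₀) = some p := hσ s₀
  have loop : ∀ (i : Bool) (u : List Bool), σfn (u ++ i :: s₀) = p →
      ∃ δ, M.run p (i :: δ) = some p := by
    intro i u hu
    obtain ⟨δ, hδ⟩ := hVext2 u i s₀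
    refine ⟨δ, ?_⟩
    have h1 : M.run M.start (V (u ++ i :: s₀)) = some p := by rw [hσ, hu]
    rw [← hδ, List.append_assoc] at h1
    rw [M.run_append_some hrunp] at h1
    simpa using h1
  obtain ⟨δ₀, hδ₀⟩ := loop false u₀ hu₀
  obtain ⟨δ₁, hδ₁⟩ := loop true u₁ hu₁
  exact ⟨V s₀, p, hrunp, ⟨δ₀, hδ₀⟩, ⟨δ₁, hδ₁⟩⟩

/-- For a good DFA `M` over `{0,1}` with start state `q_s`, the
linguage `𝐋(M)` is non-scattered if and only if `q_s` is an η̄-state. -/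
theorem linguage_nonscattered_iff_etaBar (M : PDFA Bool) (hM : M.Good) :
    ¬ Scattered {w : List Bool // w ∈ M.lang} (fun x y => inlt x.1 y.1) ↔
      M.EtaBarState M.start := by
  constructor
  · intro h
    unfold Scattered at h
    exact forward M (not_not.1 h)
  · intro h hsc
    exact hsc (backward M hM h)
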